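/- The partition function Z is differentiable on (0,∞), the mean satisfies ρ(φ) = φ·Z′(φ)/Z(φ), the map φ ↦ ρ(φ) is differentiable on (0,∞) with ρ′(φ) = φ^{−1} σ²(φ) > 0, and consequently ρ is strictly increasing on (0,∞). -/

import Mathlib

noncomputable section

/-- `c(k)! = ∏_{m=1}^k c(m)`, with `c(0)! = 1`. -/
def cfact (c : ℕ → ℝ) : ℕ → ℝ
  | 0 => 1
  | k + 1 => cfact c k * c (k + 1)

/-- The partition function `Z(φ) = ∑_{k ≥ 0} φ^k / c(k)!`. -/
def Zfun (c : ℕ → ℝ) (φ : ℝ) : ℝ := ∑' k : ℕ, φ ^ k / cfact c k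

/-- The grand canonical single-site measure `μ_φ({k}) = φ^k / (Z(φ) c(k)!)`. -/
def mu (c : ℕ → ℝ) (φ : ℝ) (k : ℕ) : ℝ := φ ^ k / (Zfun c φ * cfact c k)

/-- The mean `ρ(φ)` of `μ_φ`. -/
def rho (c : ℕ → ℝ) (φ : ℝ) : ℝ := ∑' k : ℕ, (k : ℝ) * mu c φ k

/-- The variance `σ²(φ)` of `μ_φ`. -/
def sigSq (c : ℕ → ℝ) (φ : ℝ) : ℝ := ∑' k : ℕ, ((k : ℝ) - rho c φ) ^ 2 * mu c φ k

/-- First moment generating sum `W(φ) = ∑ k φ^k / c(k)!`. -/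
def Wfun (c : ℕ → ℝ) (y : ℝ) : ℝ := ∑' k : ℕ, (k : ℝ) * y ^ k / cfact c k

/-- Second moment generating sum `S(φ) = ∑ k² φ^k / c(k)!`. -/
def Sfun (c : ℕ → ℝ) (y : ℝ) : ℝ := ∑' k : ℕ, (k : ℝ) ^ 2 * y ^ k / cfact c k

namespace StmtAux

open Filter Set

variable {c : ℕ → ℝ} {a₂ : ℝ} {k₀ : ℕ}

lemma cfact_pos (hcpos : ∀ k : ℕ, 1 ≤ k → 0 < c k) : ∀ k, 0 < cfact c k
  | 0 => one_pos
  | k + 1 => mul_pos (cfact_pos hcpos k) (hcpos (k + 1) (Nat.le_add_left 1 k))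

lemma c_nonneg (hc0 : c 0 = 0) (hcpos : ∀ k : ℕ, 1 ≤ k → 0 < c k) (k : ℕ) : 0 ≤ c k := by
  cases k with
  | zero => simp [hc0]
  | succ n => exact (hcpos _ (Nat.le_add_left 1 n)).le

lemma c_tendsto (hc0 : c 0 = 0) (hcpos : ∀ k : ℕ, 1 ≤ k → 0 < c k)
    (ha₂ : 0 < a₂) (hM : ∀ k : ℕ, a₂ ≤ c (k + k₀) - c k) :
    Tendsto c atTop atTop := by
  have hstep : ∀ n m : ℕ, c m + n * a₂ ≤ c (m + n * k₀) := by
    intro n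
    induction n with
    | zero => intro m; simp
    | succ n ih =>
      intro m
      have h1 := hM (m + n * k₀)
      have h2 := ih m
      have h3 : m + (n + 1) * k₀ = m + n * k₀ + k₀ := by ring
      rw [h3]
      push_cast
      linarith
  rw [tendsto_atTop]
  intro M
  obtain ⟨n, hn⟩ := exists_nat_ge (M / a₂)
  rw [eventually_atTop]
  refine ⟨n * k₀, fun k hk => ?_⟩
  have h1 : c (k - n * k₀) + n * a₂ ≤ c (k - n * k₀ + n * k₀) := hstep n _
  rw [Nat.sub_add_cancel hk] at h1
  have h0 : 0 ≤ c (k - n * k₀) := c_nonneg hc0 hcpos _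
  have h2 : M ≤ n * a₂ := by
    rw [div_le_iff₀ ha₂] at hn; linarith
  linarith

lemma summable_aux (hc0 : c 0 = 0) (hcpos : ∀ k : ℕ, 1 ≤ k → 0 < c k)
    (ha₂ : 0 < a₂) (hM : ∀ k : ℕ, a₂ ≤ c (k + k₀) - c k)
    (m : ℕ) {b : ℝ} (hb : 0 < b) :
    Summable (fun k : ℕ => (k : ℝ) ^ m * b ^ k / cfact c k) := by
  have hC := cfact_pos hcpos
  apply summable_of_ratio_norm_eventually_le (r := 1 / 2) (by norm_num)
  have hev : ∀ᶠ k : ℕ in atTop, 2 ^ (m + 1) * b ≤ c (k + 1) := by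
    obtain ⟨N, hN⟩ := eventually_atTop.1
      ((c_tendsto hc0 hcpos ha₂ hM).eventually_ge_atTop (2 ^ (m + 1) * b))
    exact eventually_atTop.2 ⟨N, fun k hk => hN (k + 1) (le_trans hk (Nat.le_succ k))⟩
  filter_upwards [hev, eventually_ge_atTop 1] with k hck hk1
  have hk1' : (1 : ℝ) ≤ (k : ℝ) := by exact_mod_cast hk1
  have hCk := hC k
  have hck1 : 0 < c (k + 1) := hcpos _ (Nat.le_add_left 1 k)
  have hbk : 0 < b ^ k := pow_pos hb k
  have hkm : (0 : ℝ) < (k : ℝ) ^ m := pow_pos (by linarith) m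
  have hcf : cfact c (k + 1) = cfact c k * c (k + 1) := rfl
  rw [Real.norm_of_nonneg (div_nonneg (by positivity) (hC _).le),
    Real.norm_of_nonneg (div_nonneg (by positivity) (hC _).le), hcf]
  push_cast
  have h1 : ((k : ℝ) + 1) ^ m ≤ 2 ^ m * (k : ℝ) ^ m := by
    calc ((k : ℝ) + 1) ^ m ≤ (2 * (k : ℝ)) ^ m :=
          pow_le_pow_left₀ (by linarith) (by linarith) m
      _ = 2 ^ m * (k : ℝ) ^ m := mul_pow 2 _ m
  have key : ((k : ℝ) + 1) ^ m * b ^ (k + 1) * 2 ≤ c (k + 1) * ((k : ℝ) ^ m * b ^ k) := by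
    calc ((k : ℝ) + 1) ^ m * b ^ (k + 1) * 2
        = ((k : ℝ) + 1) ^ m * (b ^ k * b) * 2 := by rw [pow_succ]
      _ ≤ 2 ^ m * (k : ℝ) ^ m * (b ^ k * b) * 2 := by
          have h2 : (0 : ℝ) ≤ b ^ k * b := by positivity
          nlinarith
      _ = (2 ^ (m + 1) * b) * ((k : ℝ) ^ m * b ^ k) := by rw [pow_succ]; ring
      _ ≤ c (k + 1) * ((k : ℝ) ^ m * b ^ k) :=
          mul_le_mul_of_nonneg_right hck (by positivity)
  have hrhs : (1 : ℝ) / 2 * ((k : ℝ) ^ m * b ^ k / cfact c k)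
      = ((k : ℝ) ^ m * b ^ k) / (2 * cfact c k) := by ring
  rw [hrhs, div_le_div_iff₀ (by positivity) (by positivity)]
  nlinarith [mul_le_mul_of_nonneg_right key hCk.le]

/-- Index-shift identity for the derivative sums. -/
lemma shift_eq (hcpos : ∀ k : ℕ, 1 ≤ k → 0 < c k) {m : ℕ} (hm : m ≠ 0) {b : ℝ} (hb : 0 < b)
    (k : ℕ) :
    (k : ℝ) ^ m * b ^ (k - 1) / cfact c k = b⁻¹ * ((k : ℝ) ^ m * b ^ k / cfact c k) := by
  cases k with
  | zero => simp [zero_pow hm]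
  | succ n =>
    have hC := (cfact_pos hcpos (n + 1)).ne'
    have hb' := hb.ne'
    rw [Nat.add_sub_cancel, pow_succ]
    field_simp

section Main

variable (hc0 : c 0 = 0) (hcpos : ∀ k : ℕ, 1 ≤ k → 0 < c k)
  (ha₂ : 0 < a₂) (hM : ∀ k : ℕ, a₂ ≤ c (k + k₀) - c k)

include hc0 hcpos ha₂ hM

lemma summable_Z {b : ℝ} (hb : 0 < b) : Summable (fun k : ℕ => b ^ k / cfact c k) :=
  (summable_aux hc0 hcpos ha₂ hM 0 hb).congr fun k => by rw [pow_zero, one_mul]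

lemma summable_W {b : ℝ} (hb : 0 < b) : Summable (fun k : ℕ => (k : ℝ) * b ^ k / cfact c k) :=
  (summable_aux hc0 hcpos ha₂ hM 1 hb).congr fun k => by rw [pow_one]

lemma Zfun_pos {φ : ℝ} (hφ : 0 < φ) : 0 < Zfun c φ := by
  apply Summable.tsum_pos (summable_Z hc0 hcpos ha₂ hM hφ)
    (fun k => div_nonneg (pow_nonneg hφ.le k) (cfact_pos hcpos k).le) 0
  simp [cfact]

lemma hasDerivAt_Zfun {φ : ℝ} (hφ : 0 < φ) :
    HasDerivAt (Zfun c) (φ⁻¹ * Wfun c φ) φ := by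
  have hC := cfact_pos hcpos
  set b : ℝ := φ + 1 with hbdef
  have hb : 0 < b := by simp [hbdef]; linarith
  have hu : Summable (fun k : ℕ => (k : ℝ) * b ^ (k - 1) / cfact c k) := by
    refine ((summable_aux hc0 hcpos ha₂ hM 1 hb).mul_left b⁻¹).congr fun k => ?_
    rw [← shift_eq hcpos one_ne_zero hb k, pow_one]
  have key : HasDerivAt (fun y : ℝ => ∑' k : ℕ, y ^ k / cfact c k)
      (∑' k : ℕ, (k : ℝ) * φ ^ (k - 1) / cfact c k) φ := by
    apply hasDerivAt_tsum_of_isPreconnected hu isOpen_Ioo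
      (convex_Ioo (0 : ℝ) b).isPreconnected
      (g := fun (k : ℕ) (y : ℝ) => y ^ k / cfact c k)
      (g' := fun (k : ℕ) (y : ℝ) => (k : ℝ) * y ^ (k - 1) / cfact c k)
      (fun k y _ => (hasDerivAt_pow k y).div_const _)
      (fun k y hy => ?_) (show φ ∈ Ioo 0 b by constructor <;> simp [hbdef, hφ])
      (summable_Z hc0 hcpos ha₂ hM hφ)
      (show φ ∈ Ioo 0 b by constructor <;> simp [hbdef, hφ])
    · rw [Real.norm_of_nonneg
        (div_nonneg (mul_nonneg (Nat.cast_nonneg k) (pow_nonneg hy.1.le _)) (hC k).le)]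
      exact (div_le_div_iff_of_pos_right (hC k)).mpr
        (mul_le_mul_of_nonneg_left (pow_le_pow_left₀ hy.1.le hy.2.le _) (Nat.cast_nonneg k))
  have heq : (∑' k : ℕ, (k : ℝ) * φ ^ (k - 1) / cfact c k) = φ⁻¹ * Wfun c φ := by
    rw [Wfun, ← tsum_mul_left]
    exact tsum_congr fun k => by
      simpa [pow_one] using shift_eq hcpos one_ne_zero hφ k
  have hfun : Zfun c = fun y : ℝ => ∑' k : ℕ, y ^ k / cfact c k := rfl
  rw [hfun, ← heq]
  exact key

lemma hasDerivAt_Wfun {φ : ℝ} (hφ : 0 < φ) :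
    HasDerivAt (Wfun c) (φ⁻¹ * Sfun c φ) φ := by
  have hC := cfact_pos hcpos
  set b : ℝ := φ + 1 with hbdef
  have hb : 0 < b := by simp [hbdef]; linarith
  have hu : Summable (fun k : ℕ => (k : ℝ) ^ 2 * b ^ (k - 1) / cfact c k) := by
    refine ((summable_aux hc0 hcpos ha₂ hM 2 hb).mul_left b⁻¹).congr fun k => ?_
    rw [← shift_eq hcpos two_ne_zero hb k]
  have key : HasDerivAt (fun y : ℝ => ∑' k : ℕ, (k : ℝ) * y ^ k / cfact c k)
      (∑' k : ℕ, (k : ℝ) ^ 2 * φ ^ (k - 1) / cfact c k) φ := by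
    apply hasDerivAt_tsum_of_isPreconnected hu isOpen_Ioo
      (convex_Ioo (0 : ℝ) b).isPreconnected
      (g := fun (k : ℕ) (y : ℝ) => (k : ℝ) * y ^ k / cfact c k)
      (g' := fun (k : ℕ) (y : ℝ) => (k : ℝ) ^ 2 * y ^ (k - 1) / cfact c k)
      (fun k y _ => ?_)
      (fun k y hy => ?_) (show φ ∈ Ioo 0 b by constructor <;> simp [hbdef, hφ])
      (summable_W hc0 hcpos ha₂ hM hφ)
      (show φ ∈ Ioo 0 b by constructor <;> simp [hbdef, hφ])
    · have h := (((hasDerivAt_pow k y).const_mul ((k : ℝ)))).div_const (cfact c k)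
      convert h using 1
      · rfl
      ring
    · rw [Real.norm_of_nonneg
        (div_nonneg (mul_nonneg (by positivity) (pow_nonneg hy.1.le _)) (hC k).le)]
      exact (div_le_div_iff_of_pos_right (hC k)).mpr
        (mul_le_mul_of_nonneg_left (pow_le_pow_left₀ hy.1.le hy.2.le _) (by positivity))
  have heq : (∑' k : ℕ, (k : ℝ) ^ 2 * φ ^ (k - 1) / cfact c k) = φ⁻¹ * Sfun c φ := by
    rw [Sfun, ← tsum_mul_left]
    exact tsum_congr fun k => shift_eq hcpos two_ne_zero hφ k
  have hfun : Wfun c = fun y : ℝ => ∑' k : ℕ, (k : ℝ) * y ^ k / cfact c k := rfl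
  rw [hfun, ← heq]
  exact key

lemma mu_eq (y : ℝ) (k : ℕ) : mu c y k = (y ^ k / cfact c k) / Zfun c y := by
  rw [mu, div_div, mul_comm]

lemma rho_eq (y : ℝ) : rho c y = Wfun c y / Zfun c y := by
  rw [rho, Wfun, ← tsum_div_const]
  exact tsum_congr fun k => by rw [mu_eq hc0 hcpos ha₂ hM]; ring

lemma mu_pos {φ : ℝ} (hφ : 0 < φ) (k : ℕ) : 0 < mu c φ k :=
  div_pos (pow_pos hφ k) (mul_pos (Zfun_pos hc0 hcpos ha₂ hM hφ) (cfact_pos hcpos k))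

lemma summable_mu {φ : ℝ} (hφ : 0 < φ) : Summable (fun k : ℕ => mu c φ k) :=
  ((summable_Z hc0 hcpos ha₂ hM hφ).div_const (Zfun c φ)).congr fun k =>
    (mu_eq hc0 hcpos ha₂ hM φ k).symm

lemma summable_kmu {φ : ℝ} (hφ : 0 < φ) : Summable (fun k : ℕ => (k : ℝ) * mu c φ k) :=
  ((summable_W hc0 hcpos ha₂ hM hφ).div_const (Zfun c φ)).congr fun k => by
    rw [mu_eq hc0 hcpos ha₂ hM]; ring

lemma summable_k2mu {φ : ℝ} (hφ : 0 < φ) : Summable (fun k : ℕ => (k : ℝ) ^ 2 * mu c φ k) :=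
  (((summable_aux hc0 hcpos ha₂ hM 2 hφ)).div_const (Zfun c φ)).congr fun k => by
    rw [mu_eq hc0 hcpos ha₂ hM]; ring

lemma tsum_mu {φ : ℝ} (hφ : 0 < φ) : ∑' k : ℕ, mu c φ k = 1 := by
  have hZ := (Zfun_pos hc0 hcpos ha₂ hM hφ).ne'
  calc ∑' k : ℕ, mu c φ k = ∑' k : ℕ, (φ ^ k / cfact c k) / Zfun c φ :=
        tsum_congr fun k => mu_eq hc0 hcpos ha₂ hM φ k
    _ = (∑' k : ℕ, φ ^ k / cfact c k) / Zfun c φ := tsum_div_const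
    _ = 1 := by rw [← Zfun, div_self hZ]

lemma tsum_k2mu {φ : ℝ} (hφ : 0 < φ) :
    ∑' k : ℕ, (k : ℝ) ^ 2 * mu c φ k = Sfun c φ / Zfun c φ := by
  calc ∑' k : ℕ, (k : ℝ) ^ 2 * mu c φ k
      = ∑' k : ℕ, ((k : ℝ) ^ 2 * φ ^ k / cfact c k) / Zfun c φ :=
        tsum_congr fun k => by rw [mu_eq hc0 hcpos ha₂ hM]; ring
    _ = Sfun c φ / Zfun c φ := by rw [tsum_div_const, Sfun]

lemma sig_eq {φ : ℝ} (hφ : 0 < φ) :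
    sigSq c φ = Sfun c φ / Zfun c φ - (rho c φ) ^ 2 := by
  have hexp : ∀ k : ℕ, ((k : ℝ) - rho c φ) ^ 2 * mu c φ k =
      ((k : ℝ) ^ 2 * mu c φ k - 2 * rho c φ * ((k : ℝ) * mu c φ k))
        + (rho c φ) ^ 2 * mu c φ k := fun k => by ring
  have s0 := summable_mu hc0 hcpos ha₂ hM hφ
  have s1 := summable_kmu hc0 hcpos ha₂ hM hφ
  have s2 := summable_k2mu hc0 hcpos ha₂ hM hφ
  rw [sigSq, tsum_congr hexp,
    Summable.tsum_add (s2.sub (s1.mul_left _)) (s0.mul_left _),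
    Summable.tsum_sub s2 (s1.mul_left _), tsum_mul_left, tsum_mul_left,
    tsum_mu hc0 hcpos ha₂ hM hφ, tsum_k2mu hc0 hcpos ha₂ hM hφ]
  have hr : ∑' k : ℕ, (k : ℝ) * mu c φ k = rho c φ := rfl
  rw [hr]
  ring

lemma sig_pos {φ : ℝ} (hφ : 0 < φ) : 0 < sigSq c φ := by
  have hexp : ∀ k : ℕ, ((k : ℝ) - rho c φ) ^ 2 * mu c φ k =
      ((k : ℝ) ^ 2 * mu c φ k - 2 * rho c φ * ((k : ℝ) * mu c φ k))
        + (rho c φ) ^ 2 * mu c φ k := fun k => by ring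
  have s0 := summable_mu hc0 hcpos ha₂ hM hφ
  have s1 := summable_kmu hc0 hcpos ha₂ hM hφ
  have s2 := summable_k2mu hc0 hcpos ha₂ hM hφ
  have ssum : Summable (fun k : ℕ => ((k : ℝ) - rho c φ) ^ 2 * mu c φ k) :=
    ((s2.sub (s1.mul_left _)).add (s0.mul_left _)).congr fun k => (hexp k).symm
  have hnn : ∀ k : ℕ, 0 ≤ ((k : ℝ) - rho c φ) ^ 2 * mu c φ k := fun k =>
    mul_nonneg (sq_nonneg _) (mu_pos hc0 hcpos ha₂ hM hφ k).le
  by_cases hr : rho c φ = 0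
  · refine Summable.tsum_pos ssum hnn 1 ?_
    rw [hr]
    simpa using mu_pos hc0 hcpos ha₂ hM hφ 1
  · refine Summable.tsum_pos ssum hnn 0 ?_
    have : (0 : ℝ) < ((0 : ℝ) - rho c φ) ^ 2 :=
      sq_pos_of_ne_zero (sub_ne_zero.mpr (Ne.symm hr))
    simpa using mul_pos this (mu_pos hc0 hcpos ha₂ hM hφ 0)

lemma hasDerivAt_rho {φ : ℝ} (hφ : 0 < φ) :
    HasDerivAt (rho c) (φ⁻¹ * sigSq c φ) φ := by
  have hZ := Zfun_pos hc0 hcpos ha₂ hM hφ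
  have hD := (hasDerivAt_Wfun hc0 hcpos ha₂ hM hφ).div
    (hasDerivAt_Zfun hc0 hcpos ha₂ hM hφ) hZ.ne'
  have hEq : rho c =ᶠ[nhds φ] fun y => Wfun c y / Zfun c y :=
    Filter.Eventually.of_forall (rho_eq hc0 hcpos ha₂ hM)
  have hval : (φ⁻¹ * Sfun c φ * Zfun c φ - Wfun c φ * (φ⁻¹ * Wfun c φ)) / Zfun c φ ^ 2
      = φ⁻¹ * sigSq c φ := by
    rw [sig_eq hc0 hcpos ha₂ hM hφ, rho_eq hc0 hcpos ha₂ hM]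
    field_simp
  rw [← hval]
  exact hD.congr_of_eventuallyEq hEq

end Main

end StmtAux

/-- `Z` is differentiable on `(0,∞)`, `ρ(φ) = φ Z′(φ)/Z(φ)`,
`ρ` is differentiable on `(0,∞)` with `ρ′(φ) = φ⁻¹ σ²(φ) > 0`, and consequently `ρ`
is strictly increasing on `(0,∞)`. -/
theorem stmt2 (c : ℕ → ℝ) (a₁ a₂ : ℝ) (k₀ : ℕ)
    (hc0 : c 0 = 0) (hcpos : ∀ k : ℕ, 1 ≤ k → 0 < c k)
    (hLG : ∀ k : ℕ, |c (k + 1) - c k| ≤ a₁)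
    (hk₀ : 1 ≤ k₀) (ha₂ : 0 < a₂)
    (hM : ∀ k : ℕ, a₂ ≤ c (k + k₀) - c k) :
    DifferentiableOn ℝ (Zfun c) (Set.Ioi 0) ∧
    (∀ φ : ℝ, 0 < φ →
      rho c φ = φ * deriv (Zfun c) φ / Zfun c φ ∧
      HasDerivAt (rho c) (φ⁻¹ * sigSq c φ) φ ∧
      0 < φ⁻¹ * sigSq c φ) ∧
    StrictMonoOn (rho c) (Set.Ioi 0) := by
  clear hLG hk₀
  refine ⟨fun φ hφ => ?_, fun φ hφ => ⟨?_, ?_, ?_⟩, ?_⟩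
  · exact (StmtAux.hasDerivAt_Zfun hc0 hcpos ha₂ hM hφ).differentiableAt.differentiableWithinAt
  · rw [(StmtAux.hasDerivAt_Zfun hc0 hcpos ha₂ hM hφ).deriv,
      StmtAux.rho_eq hc0 hcpos ha₂ hM φ, mul_inv_cancel_left₀ hφ.ne']
  · exact StmtAux.hasDerivAt_rho hc0 hcpos ha₂ hM hφ
  · exact mul_pos (inv_pos.mpr hφ) (StmtAux.sig_pos hc0 hcpos ha₂ hM hφ)
  · apply strictMonoOn_of_deriv_pos (convex_Ioi 0)
    · exact fun φ hφ =>
        (StmtAux.hasDerivAt_rho hc0 hcpos ha₂ hM hφ).continuousAt.continuousWithinAt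
    · intro φ hφ
      rw [interior_Ioi] at hφ
      rw [(StmtAux.hasDerivAt_rho hc0 hcpos ha₂ hM hφ).deriv]
      exact mul_pos (inv_pos.mpr hφ) (StmtAux.sig_pos hc0 hcpos ha₂ hM hφ)
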